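/- Let H be a separable infinite-dimensional complex Hilbert space, let {f_n}_{n=0}^∞ and {g_n}_{n=0}^∞ be sequences in H, and let B be a nonzero bounded linear operator on H such that {B f_n} is a Parseval frame for H. Suppose {f_n − g_n}_{n=0}^∞ is a Bessel sequence with bound 𝓑 < 1/‖B‖², i.e., ∑_{n=0}^∞ |⟨f, f_n − g_n⟩|² ≤ 𝓑‖f‖² for all f ∈ H. Then {g_n} is a CFC sequence (there exists a bounded linear operator C on H such that {C g_n} is a Parseval frame for H). Moreover, if {B f_n} is an orthonormal basis of H, then {g_n} is a CO sequence (there exists a bounded linear operator C on H such that {C g_n} is an orthonormal basis of H). -/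

import Mathlib

open scoped ComplexInnerProductSpace ENNReal NNReal

namespace PWaux

lemma two_pos' : (0:ℝ) < (2 : ℝ≥0∞).toReal := by norm_num

lemma mem2 {g : ℕ → ℂ} (hg : Summable fun n => ‖g n‖ ^ 2) : Memℓp g 2 := by
  apply memℓp_gen
  convert hg using 2 with n
  norm_num

lemma hasSum2 (x : lp (fun _ : ℕ => ℂ) 2) : HasSum (fun n => ‖x n‖ ^ 2) (‖x‖ ^ 2) := by
  have := lp.hasSum_norm two_pos' x
  convert this using 2 <;> norm_num

lemma normle2 {x : lp (fun _ : ℕ => ℂ) 2} {C : ℝ} (hC : 0 ≤ C)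
    (h : ∑' n, ‖x n‖ ^ 2 ≤ C ^ 2) : ‖x‖ ≤ C := by
  apply lp.norm_le_of_tsum_le two_pos' hC
  convert h using 2 <;> norm_num

variable {H : Type*} [NormedAddCommGroup H] [InnerProductSpace ℂ H] [CompleteSpace H]

lemma exists_analysisOp (e k : ℕ → H) (s : ℝ) (hs0 : 0 ≤ s)
    (he : ∀ y : H, HasSum (fun n => ‖⟪y, e n⟫‖ ^ 2) (‖y‖ ^ 2))
    (hd : ∀ y : H, Summable (fun n => ‖⟪y, e n - k n⟫‖ ^ 2) ∧
        ∑' n, ‖⟪y, e n - k n⟫‖ ^ 2 ≤ s ^ 2 * ‖y‖ ^ 2) :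
    ∃ V : H →L[ℂ] lp (fun _ : ℕ => ℂ) 2,
      (∀ (y : H) (n : ℕ), V y n = ⟪k n, y⟫) ∧
      (∀ y : H, (1 - s) * ‖y‖ ≤ ‖V y‖) := by
  classical
  have he' : ∀ y : H, HasSum (fun n => ‖⟪e n, y⟫‖ ^ 2) (‖y‖ ^ 2) := by
    intro y; simpa only [norm_inner_symm] using he y
  have hd' : ∀ y : H, Summable (fun n => ‖⟪e n - k n, y⟫‖ ^ 2) ∧
      ∑' n, ‖⟪e n - k n, y⟫‖ ^ 2 ≤ s ^ 2 * ‖y‖ ^ 2 := by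
    intro y
    constructor
    · have := (hd y).1; apply this.congr; intro n; rw [norm_inner_symm]
    · have h2 := (hd y).2
      calc ∑' n, ‖⟪e n - k n, y⟫‖ ^ 2 = ∑' n, ‖⟪y, e n - k n⟫‖ ^ 2 := by
            congr 1; funext n; rw [norm_inner_symm]
        _ ≤ s ^ 2 * ‖y‖ ^ 2 := h2
  have memE : ∀ y : H, Memℓp (fun n => (⟪e n, y⟫ : ℂ)) 2 := fun y => mem2 (he' y).summable
  have memD : ∀ y : H, Memℓp (fun n => (⟪e n - k n, y⟫ : ℂ)) 2 := fun y => mem2 (hd' y).1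
  have memK : ∀ y : H, Memℓp (fun n => (⟪k n, y⟫ : ℂ)) 2 := by
    intro y
    have h : (fun n => (⟪k n, y⟫ : ℂ)) = (fun n => (⟪e n, y⟫ : ℂ)) - fun n => ⟪e n - k n, y⟫ := by
      funext n; simp [inner_sub_left]
    rw [h]
    exact (memE y).sub (memD y)
  set aE : H → lp (fun _ : ℕ => ℂ) 2 := fun y => ⟨fun n => ⟪e n, y⟫, memE y⟩ with haE
  set aD : H → lp (fun _ : ℕ => ℂ) 2 := fun y => ⟨fun n => ⟪e n - k n, y⟫, memD y⟩ with haD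
  set aK : H → lp (fun _ : ℕ => ℂ) 2 := fun y => ⟨fun n => ⟪k n, y⟫, memK y⟩ with haK
  have hKED : ∀ y, aK y = aE y - aD y := by
    intro y
    apply lp.ext
    funext n
    have h1 : ((aE y - aD y : lp (fun _ : ℕ => ℂ) 2) : ∀ _ : ℕ, ℂ) n
        = (⟪e n, y⟫ : ℂ) - ⟪e n - k n, y⟫ := by
      rw [lp.coeFn_sub]; rfl
    have h2 : ((aK y : lp (fun _ : ℕ => ℂ) 2) : ∀ _ : ℕ, ℂ) n = ⟪k n, y⟫ := rfl
    rw [h1, h2]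
    simp [inner_sub_left]
  have norm_aE : ∀ y, ‖aE y‖ = ‖y‖ := by
    intro y
    have h1 := hasSum2 (aE y)
    have h2 : HasSum (fun n => ‖(aE y : ∀ _ : ℕ, ℂ) n‖ ^ 2) (‖y‖ ^ 2) := he' y
    have h3 := h1.unique h2
    have h4 : 0 ≤ ‖aE y‖ := norm_nonneg _
    nlinarith [norm_nonneg y]
  have norm_aD : ∀ y, ‖aD y‖ ≤ s * ‖y‖ := by
    intro y
    refine normle2 (by positivity) ?_
    have h2 := (hd' y).2
    calc (∑' n, ‖(aD y : ∀ _ : ℕ, ℂ) n‖ ^ 2) ≤ s ^ 2 * ‖y‖ ^ 2 := h2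
      _ = (s * ‖y‖) ^ 2 := by ring
  let Vlin : H →ₗ[ℂ] lp (fun _ : ℕ => ℂ) 2 :=
    { toFun := aK
      map_add' := fun x y => by
        apply lp.ext; funext n
        have h1 : ((aK x + aK y : lp (fun _ : ℕ => ℂ) 2) : ∀ _ : ℕ, ℂ) n
            = (⟪k n, x⟫ : ℂ) + ⟪k n, y⟫ := by rw [lp.coeFn_add]; rfl
        have h2 : ((aK (x + y) : lp (fun _ : ℕ => ℂ) 2) : ∀ _ : ℕ, ℂ) n = ⟪k n, x + y⟫ := rfl
        rw [h1, h2, inner_add_right]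
      map_smul' := fun c x => by
        apply lp.ext; funext n
        have h1 : ((c • aK x : lp (fun _ : ℕ => ℂ) 2) : ∀ _ : ℕ, ℂ) n
            = c • (⟪k n, x⟫ : ℂ) := by rw [lp.coeFn_smul]; rfl
        have h2 : ((aK (c • x) : lp (fun _ : ℕ => ℂ) 2) : ∀ _ : ℕ, ℂ) n = ⟪k n, c • x⟫ := rfl
        rw [h2, inner_smul_right]
        rw [RingHom.id_apply, h1]
        simp }
  have Vbound : ∀ y, ‖Vlin y‖ ≤ (1 + s) * ‖y‖ := by
    intro y
    have hE : Vlin y = aE y - aD y := hKED y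
    rw [hE]
    calc ‖aE y - aD y‖ ≤ ‖aE y‖ + ‖aD y‖ := norm_sub_le _ _
      _ ≤ ‖y‖ + s * ‖y‖ := by rw [norm_aE]; exact add_le_add le_rfl (norm_aD y)
      _ = (1 + s) * ‖y‖ := by ring
  refine ⟨Vlin.mkContinuous (1 + s) Vbound, fun y n => rfl, fun y => ?_⟩
  have hv : (Vlin.mkContinuous (1 + s) Vbound) y = aE y - aD y := hKED y
  rw [hv]
  calc (1 - s) * ‖y‖ = ‖y‖ - s * ‖y‖ := by ring
    _ ≤ ‖aE y‖ - ‖aD y‖ := by rw [norm_aE]; linarith [norm_aD y]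
    _ ≤ ‖aE y - aD y‖ := norm_sub_norm_le _ _


lemma exists_parseval_op (k : ℕ → H) (s : ℝ) (hs0 : 0 ≤ s) (hs1 : s < 1)
    (V : H →L[ℂ] lp (fun _ : ℕ => ℂ) 2)
    (hVk : ∀ (y : H) (n : ℕ), V y n = ⟪k n, y⟫)
    (hVlow : ∀ y : H, (1 - s) * ‖y‖ ≤ ‖V y‖) :
    ∃ T : H →L[ℂ] H, ∀ y : H, HasSum (fun n => ‖⟪y, T (k n)⟫‖ ^ 2) (‖y‖ ^ 2) := by
  set S := ContinuousLinearMap.adjoint V ∘L V with hS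
  have hSsa : IsSelfAdjoint S := by
    rw [ContinuousLinearMap.isSelfAdjoint_iff', hS, ContinuousLinearMap.adjoint_comp,
      ContinuousLinearMap.adjoint_adjoint]
  have hSinner : ∀ y : H, ⟪S y, y⟫ = ((‖V y‖ ^ 2 : ℝ) : ℂ) := by
    intro y
    have h1 : ⟪S y, y⟫ = ⟪V y, V y⟫ := ContinuousLinearMap.adjoint_inner_left V y (V y)
    rw [h1, inner_self_eq_norm_sq_to_K]
    norm_cast
  set cc : ℝ := (1 - s) ^ 2 with hcc
  have h1s : 0 < 1 - s := by linarith
  have hc0 : 0 < cc := by rw [hcc]; positivity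
  have hlow : ∀ y : H, cc * ‖y‖ ^ 2 ≤ ‖V y‖ ^ 2 := by
    intro y
    have h1 := hVlow y
    have h2 : 0 ≤ (1 - s) * ‖y‖ := by positivity
    nlinarith [norm_nonneg y, norm_nonneg (V y)]
  have hspec : spectrum ℝ S ⊆ Set.Ici cc := by
    intro x hx
    by_contra hxc
    rw [Set.mem_Ici, not_le] at hxc
    have hunit : IsUnit (S - algebraMap ℝ (H →L[ℂ] H) x) := by
      refine ContinuousLinearMap.isUnit_of_forall_le_norm_inner_map (𝕜 := ℂ)
        (S - algebraMap ℝ (H →L[ℂ] H) x) (c := Real.toNNReal (cc - x))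
        (Real.toNNReal_pos.mpr (by linarith)) fun y => ?_
      have hcoe : ((Real.toNNReal (cc - x) : ℝ≥0) : ℝ) = cc - x :=
        Real.coe_toNNReal _ (by linarith)
      have hA : ⟪(S - algebraMap ℝ (H →L[ℂ] H) x) y, y⟫
          = ((‖V y‖ ^ 2 - x * ‖y‖ ^ 2 : ℝ) : ℂ) := by
        rw [ContinuousLinearMap.sub_apply, inner_sub_left, hSinner,
          Algebra.algebraMap_eq_smul_one]
        have hxy : ((x • (1 : H →L[ℂ] H)) y) = ((x : ℂ)) • y := by
          rw [ContinuousLinearMap.smul_apply, ContinuousLinearMap.one_apply,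
            ← algebraMap_smul ℂ x y, Complex.coe_algebraMap]
        rw [hxy, inner_smul_left, inner_self_eq_norm_sq_to_K, Complex.conj_ofReal]
        push_cast
        try ring
        try rfl
      rw [hA, hcoe]
      have h1 : cc * ‖y‖ ^ 2 ≤ ‖V y‖ ^ 2 := hlow y
      have h2 : ‖((‖V y‖ ^ 2 - x * ‖y‖ ^ 2 : ℝ) : ℂ)‖ = |‖V y‖ ^ 2 - x * ‖y‖ ^ 2| := by
        rw [Complex.norm_real, Real.norm_eq_abs]
      rw [h2]
      have h3 : ‖y‖ ^ 2 * (cc - x) ≤ ‖V y‖ ^ 2 - x * ‖y‖ ^ 2 := by nlinarith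
      exact h3.trans (le_abs_self _)
    rw [spectrum.mem_iff] at hx
    exact hx (by simpa [neg_sub] using hunit.neg)
  -- continuous functional calculus: T = S^{-1/2}
  set g : ℝ → ℝ := fun t => (Real.sqrt t)⁻¹ with hg
  have hgc : ContinuousOn g (spectrum ℝ S) := by
    apply ContinuousOn.inv₀ Real.continuous_sqrt.continuousOn
    intro t ht
    have h1 := hspec ht
    rw [Set.mem_Ici] at h1
    exact (Real.sqrt_pos.mpr (lt_of_lt_of_le hc0 h1)).ne'
  set T := cfc g S with hT
  have hTsa : IsSelfAdjoint T := cfc_predicate g S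
  have hTST : T * S * T = 1 := by
    have e1 : cfc (fun t => g t * id t) S = T * S := by
      rw [cfc_mul g id S hgc continuousOn_id, cfc_id ℝ S (ha := hSsa), ← hT]
    have e2 : cfc (fun t => (g t * id t) * g t) S = cfc (fun t => g t * id t) S * T := by
      rw [cfc_mul (fun t => g t * id t) g S (hgc.mul continuousOn_id) hgc, ← hT]
    have e3 : (spectrum ℝ S).EqOn (fun t => (g t * id t) * g t) (fun _ => (1 : ℝ)) := by
      intro t ht
      have h1 := hspec ht
      rw [Set.mem_Ici] at h1
      have ht0 : 0 < t := lt_of_lt_of_le hc0 h1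
      have hsq : Real.sqrt t ≠ 0 := (Real.sqrt_pos.mpr ht0).ne'
      have hmul : Real.sqrt t * Real.sqrt t = t := Real.mul_self_sqrt ht0.le
      show (Real.sqrt t)⁻¹ * t * (Real.sqrt t)⁻¹ = 1
      field_simp
      exact (Real.sq_sqrt ht0.le).symm
    calc T * S * T = cfc (fun t => g t * id t) S * T := by rw [e1]
      _ = cfc (fun t => (g t * id t) * g t) S := e2.symm
      _ = cfc (fun _ : ℝ => (1 : ℝ)) S := cfc_congr e3
      _ = 1 := by rw [cfc_const (1 : ℝ) S hSsa, map_one]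
  have hTadj : ContinuousLinearMap.adjoint T = T := hTsa
  refine ⟨T, fun y => ?_⟩
  have key : (fun n => ‖⟪y, T (k n)⟫‖ ^ 2) = fun n => ‖(V (T y) : ∀ _ : ℕ, ℂ) n‖ ^ 2 := by
    funext n
    rw [hVk (T y) n]
    have h1 := ContinuousLinearMap.adjoint_inner_right T y (k n)
    rw [hTadj] at h1
    rw [h1, norm_inner_symm]
  have hnorm : ‖V (T y)‖ ^ 2 = ‖y‖ ^ 2 := by
    have h1 : ((‖V (T y)‖ ^ 2 : ℝ) : ℂ) = ⟪S (T y), T y⟫ := (hSinner (T y)).symm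
    have h2' := ContinuousLinearMap.adjoint_inner_left T y (S (T y))
    rw [hTadj] at h2'
    have h2 : ⟪S (T y), T y⟫ = ⟪T (S (T y)), y⟫ := h2'.symm
    have h3 : T (S (T y)) = y := by
      have h4 := congrArg (fun (A : H →L[ℂ] H) => A y) hTST
      simpa [ContinuousLinearMap.mul_apply] using h4
    have h5 : ((‖V (T y)‖ ^ 2 : ℝ) : ℂ) = ((‖y‖ ^ 2 : ℝ) : ℂ) := by
      rw [h1, h2, h3, inner_self_eq_norm_sq_to_K]
      norm_cast
    exact_mod_cast h5
  rw [key]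
  have h6 := hasSum2 (V (T y))
  rwa [hnorm] at h6


lemma exists_co_op (e k : ℕ → H) (s : ℝ) (hs0 : 0 ≤ s) (hs1 : s < 1)
    (V : H →L[ℂ] lp (fun _ : ℕ => ℂ) 2)
    (hVk : ∀ (y : H) (n : ℕ), V y n = ⟪k n, y⟫)
    (hd : ∀ y : H, Summable (fun n => ‖⟪y, e n - k n⟫‖ ^ 2) ∧
        ∑' n, ‖⟪y, e n - k n⟫‖ ^ 2 ≤ s ^ 2 * ‖y‖ ^ 2)
    (honb : Orthonormal ℂ e)
    (hsp : (Submodule.span ℂ (Set.range e)).topologicalClosure = ⊤) :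
    ∃ D : H →L[ℂ] H, ∀ n, D (k n) = e n := by
  classical
  let b : HilbertBasis ℕ ℂ H := HilbertBasis.mk honb hsp.ge
  have hb : ⇑b = e := HilbertBasis.coe_mk _ _
  let Rm : H →L[ℂ] lp (fun _ : ℕ => ℂ) 2 :=
    (b.repr.toContinuousLinearEquiv : H ≃L[ℂ] lp (fun _ : ℕ => ℂ) 2)
  let RS : lp (fun _ : ℕ => ℂ) 2 →L[ℂ] H :=
    (b.repr.symm.toContinuousLinearEquiv : lp (fun _ : ℕ => ℂ) 2 ≃L[ℂ] H)
  have hRm : ∀ y : H, Rm y = b.repr y := fun y => rfl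
  have hRS : ∀ z, RS z = b.repr.symm z := fun z => rfl
  set W : H →L[ℂ] H := RS ∘L V with hW
  set U : H →L[ℂ] H := ContinuousLinearMap.adjoint W with hU
  have hadjRS : ContinuousLinearMap.adjoint RS = Rm := by
    symm
    rw [ContinuousLinearMap.eq_adjoint_iff]
    intro x y
    rw [hRm, hRS]
    rw [← b.repr.inner_map_map x (b.repr.symm y), b.repr.apply_symm_apply]
  have hUe : ∀ m, U (e m) = k m := by
    intro m
    rw [hU, hW, ContinuousLinearMap.adjoint_comp, ContinuousLinearMap.comp_apply, hadjRS]
    have h1 : Rm (e m) = lp.single 2 m 1 := by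
      rw [hRm]
      rw [show e m = b m from (congrFun hb m).symm]
      exact b.repr_self m
    rw [h1]
    apply ext_inner_right ℂ
    intro z
    rw [ContinuousLinearMap.adjoint_inner_left, lp.inner_single_left]
    rw [hVk z m]
    simp
  have h1W : ∀ y : H, ‖((1 : H →L[ℂ] H) - W) y‖ ≤ s * ‖y‖ := by
    intro y
    have hy : ((1 : H →L[ℂ] H) - W) y = y - RS (V y) := by
      rw [ContinuousLinearMap.sub_apply, ContinuousLinearMap.one_apply,
        ContinuousLinearMap.comp_apply]
    rw [hy]
    have h2 : ‖y - RS (V y)‖ = ‖b.repr y - V y‖ := by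
      rw [← b.repr.norm_map (y - RS (V y)), map_sub, hRS, b.repr.apply_symm_apply]
    rw [h2]
    apply normle2 (by positivity)
    have hcoord : ∀ n, ((b.repr y - V y : lp (fun _ : ℕ => ℂ) 2) : ∀ _ : ℕ, ℂ) n
        = ⟪e n - k n, y⟫ := by
      intro n
      rw [lp.coeFn_sub]
      show b.repr y n - V y n = _
      rw [b.repr_apply_apply, hVk, inner_sub_left]
      exact congrArg (fun v => (inner ℂ v y : ℂ) - inner ℂ (k n) y) (congrFun hb n)
    calc ∑' n, ‖((b.repr y - V y : lp (fun _ : ℕ => ℂ) 2) : ∀ _ : ℕ, ℂ) n‖ ^ 2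
        = ∑' n, ‖⟪e n - k n, y⟫‖ ^ 2 := by congr 1; funext n; rw [hcoord]
      _ = ∑' n, ‖⟪y, e n - k n⟫‖ ^ 2 := by congr 1; funext n; rw [norm_inner_symm]
      _ ≤ s ^ 2 * ‖y‖ ^ 2 := (hd y).2
      _ = (s * ‖y‖) ^ 2 := by ring
  have hnorm1W : ‖(1 : H →L[ℂ] H) - U‖ < 1 := by
    have hadj : (1 : H →L[ℂ] H) - U
        = ContinuousLinearMap.adjoint ((1 : H →L[ℂ] H) - W) := by
      rw [map_sub, hU]
      congr 1
      rw [ContinuousLinearMap.one_def, ContinuousLinearMap.adjoint_id]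
    rw [hadj]
    have hnn : ‖ContinuousLinearMap.adjoint ((1 : H →L[ℂ] H) - W)‖
        = ‖(1 : H →L[ℂ] H) - W‖ := by
      exact LinearIsometryEquiv.norm_map ContinuousLinearMap.adjoint _
    rw [hnn]
    calc ‖(1 : H →L[ℂ] H) - W‖ ≤ s := ContinuousLinearMap.opNorm_le_bound _ hs0 h1W
      _ < 1 := hs1
  set u : (H →L[ℂ] H)ˣ := Units.oneSub ((1 : H →L[ℂ] H) - U) hnorm1W with hu
  have huval : (↑u : H →L[ℂ] H) = U := by
    rw [hu]; show 1 - ((1 : H →L[ℂ] H) - U) = U; exact sub_sub_cancel 1 U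
  refine ⟨(↑u⁻¹ : H →L[ℂ] H), fun n => ?_⟩
  have h3 : (↑u⁻¹ * ↑u : H →L[ℂ] H) (e n) = e n := by rw [u.inv_mul]; rfl
  rw [ContinuousLinearMap.mul_apply, huval, hUe n] at h3
  exact h3


end PWaux

open PWaux in
/-- Paley–Wiener type result: if `{B f_n}` is a Parseval frame with `B ≠ 0`
bounded, and `{f_n - g_n}` is a Bessel sequence with bound `𝓑 < 1/‖B‖²`, then `{g_n}` is a
CFC sequence; if moreover `{B f_n}` is an orthonormal basis, then `{g_n}` is a CO sequence. -/
theorem stmt10 {H : Type*} [NormedAddCommGroup H] [InnerProductSpace ℂ H]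
    [CompleteSpace H] [TopologicalSpace.SeparableSpace H]
    (hH : ¬ FiniteDimensional ℂ H) (fseq gseq : ℕ → H)
    (B : H →L[ℂ] H) (hB0 : B ≠ 0)
    (hB : ∀ f : H, HasSum (fun n => ‖⟪f, B (fseq n)⟫‖ ^ 2) (‖f‖ ^ 2))
    (𝓑 : ℝ) (h𝓑 : 𝓑 < 1 / ‖B‖ ^ 2)
    (hBessel : ∀ f : H, Summable (fun n => ‖⟪f, fseq n - gseq n⟫‖ ^ 2) ∧
      ∑' n, ‖⟪f, fseq n - gseq n⟫‖ ^ 2 ≤ 𝓑 * ‖f‖ ^ 2) :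
    (∃ C : H →L[ℂ] H, ∀ f : H, HasSum (fun n => ‖⟪f, C (gseq n)⟫‖ ^ 2) (‖f‖ ^ 2)) ∧
    ((Orthonormal ℂ (fun n => B (fseq n)) ∧
        (Submodule.span ℂ (Set.range fun n => B (fseq n))).topologicalClosure = ⊤) →
      ∃ C : H →L[ℂ] H, Orthonormal ℂ (fun n => C (gseq n)) ∧
        (Submodule.span ℂ (Set.range fun n => C (gseq n))).topologicalClosure = ⊤) := by
  classical
  set e : ℕ → H := fun n => B (fseq n) with he_def
  set k : ℕ → H := fun n => B (gseq n) with hk_def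
  -- a nonzero vector
  have hnt : ∃ f : H, f ≠ 0 := by
    by_contra h
    push_neg at h
    have hss : Subsingleton H := ⟨fun x y => by rw [h x, h y]⟩
    exact hH inferInstance
  have hBpos : (0:ℝ) < ‖B‖ := norm_pos_iff.mpr hB0
  have hBnn : (0:ℝ) ≤ 𝓑 := by
    obtain ⟨f, hf⟩ := hnt
    have h1 := (hBessel f).2
    have h2 : (0:ℝ) ≤ ∑' n, ‖⟪f, fseq n - gseq n⟫‖ ^ 2 :=
      tsum_nonneg fun n => by positivity
    have h3 : (0:ℝ) < ‖f‖ ^ 2 := by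
      have := norm_pos_iff.mpr hf
      positivity
    nlinarith
  set r : ℝ := 𝓑 * ‖B‖ ^ 2 with hr_def
  have hr0 : 0 ≤ r := by positivity
  have hr1 : r < 1 := by
    rw [lt_div_iff₀ (by positivity)] at h𝓑
    simpa [hr_def] using h𝓑
  set s : ℝ := Real.sqrt r with hs_def
  have hs0 : 0 ≤ s := Real.sqrt_nonneg r
  have hs2 : s ^ 2 = r := Real.sq_sqrt hr0
  have hs1 : s < 1 := by nlinarith
  have he : ∀ y : H, HasSum (fun n => ‖⟪y, e n⟫‖ ^ 2) (‖y‖ ^ 2) := hB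
  have hd : ∀ y : H, Summable (fun n => ‖⟪y, e n - k n⟫‖ ^ 2) ∧
      ∑' n, ‖⟪y, e n - k n⟫‖ ^ 2 ≤ s ^ 2 * ‖y‖ ^ 2 := by
    intro y
    have hfun : (fun n => ‖⟪y, e n - k n⟫‖ ^ 2)
        = fun n => ‖⟪ContinuousLinearMap.adjoint B y, fseq n - gseq n⟫‖ ^ 2 := by
      funext n
      rw [he_def, hk_def]
      have h1 : B (fseq n) - B (gseq n) = B (fseq n - gseq n) := (map_sub B _ _).symm
      rw [h1, ← ContinuousLinearMap.adjoint_inner_left B (fseq n - gseq n) y]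
    constructor
    · rw [hfun]; exact (hBessel _).1
    · rw [hfun]
      have h1 := (hBessel (ContinuousLinearMap.adjoint B y)).2
      have h2 : ‖ContinuousLinearMap.adjoint B y‖ ≤ ‖B‖ * ‖y‖ := by
        have h3 := (ContinuousLinearMap.adjoint B).le_opNorm y
        have h4 : ‖ContinuousLinearMap.adjoint B‖ = ‖B‖ :=
          LinearIsometryEquiv.norm_map ContinuousLinearMap.adjoint B
        rwa [h4] at h3
      have h5 : 0 ≤ ‖ContinuousLinearMap.adjoint B y‖ := norm_nonneg _
      calc ∑' n, ‖⟪ContinuousLinearMap.adjoint B y, fseq n - gseq n⟫‖ ^ 2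
          ≤ 𝓑 * ‖ContinuousLinearMap.adjoint B y‖ ^ 2 := h1
        _ ≤ 𝓑 * (‖B‖ * ‖y‖) ^ 2 := by
              have h6 : ‖ContinuousLinearMap.adjoint B y‖ ^ 2 ≤ (‖B‖ * ‖y‖) ^ 2 := by nlinarith
              exact mul_le_mul_of_nonneg_left h6 hBnn
        _ = s ^ 2 * ‖y‖ ^ 2 := by rw [hs2, hr_def]; ring
  obtain ⟨V, hVk, hVlow⟩ := exists_analysisOp e k s hs0 he hd
  constructor
  · obtain ⟨T, hT⟩ := exists_parseval_op k s hs0 hs1 V hVk hVlow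
    exact ⟨T ∘L B, fun f => hT f⟩
  · rintro ⟨honb, hsp⟩
    obtain ⟨D, hD⟩ := exists_co_op e k s hs0 hs1 V hVk hd honb hsp
    have heq : (fun n => (D ∘L B) (gseq n)) = e := funext fun n => hD n
    refine ⟨D ∘L B, ?_, ?_⟩
    · rw [heq]; exact honb
    · rw [heq]; exact hsp
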